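/- For fixed a, b > 0 and c > 0, the function z ↦ B(z; a+c, b)/B(z; a, b) is monotonically increasing on (0, 1], where B(z; a, b) is the incomplete beta function. -/

import Mathlib

open MeasureTheory intervalIntegral Set

/-- The incomplete beta function `B(z; a, b) = ∫_0^z t^{a-1}(1-t)^{b-1} dt`. -/
noncomputable def incBeta (z a b : ℝ) : ℝ :=
  ∫ t in (0 : ℝ)..z, t ^ (a - 1) * (1 - t) ^ (b - 1)

lemma incBeta_integrand_integrable (a b : ℝ) (ha : 0 < a) (hb : 0 < b) :
    IntervalIntegrable (fun t : ℝ => t ^ (a - 1) * (1 - t) ^ (b - 1)) volume 0 1 := by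
  have h := Complex.betaIntegral_convergent (u := (a : ℂ)) (v := (b : ℂ))
    (by simpa using ha) (by simpa using hb)
  have h2 : IntervalIntegrable
      (fun x : ℝ => ((x : ℂ) ^ ((a : ℂ) - 1) * (1 - (x : ℂ)) ^ ((b : ℂ) - 1)).re)
      volume 0 1 := ⟨h.1.re, h.2.re⟩
  apply h2.congr
  intro x hx
  beta_reduce
  rw [uIoc_of_le (by norm_num : (0:ℝ) ≤ 1)] at hx
  have hx0 : (0:ℝ) ≤ x := hx.1.le
  have hx1 : (0:ℝ) ≤ 1 - x := by linarith [hx.2]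
  have e1 : (x : ℂ) ^ ((a : ℂ) - 1) = ((x ^ (a - 1) : ℝ) : ℂ) := by
    rw [Complex.ofReal_cpow hx0]; push_cast; ring_nf
  have e2 : (1 - (x : ℂ)) ^ ((b : ℂ) - 1) = (((1 - x) ^ (b - 1) : ℝ) : ℂ) := by
    rw [Complex.ofReal_cpow hx1]; push_cast; ring_nf
  rw [e1, e2, ← Complex.ofReal_mul, Complex.ofReal_re]

lemma incBeta_pos (z a b : ℝ) (ha : 0 < a) (hb : 0 < b) (hz : 0 < z) (hz1 : z ≤ 1) :
    0 < incBeta z a b := by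
  rw [incBeta]
  apply intervalIntegral_pos_of_pos_on
  · exact (incBeta_integrand_integrable a b ha hb).mono_set
      (by rw [uIcc_of_le hz.le, uIcc_of_le (by norm_num : (0:ℝ) ≤ 1)]
          exact Icc_subset_Icc le_rfl hz1)
  · intro t ht
    have h1 : 0 < t := ht.1
    have h2 : 0 < 1 - t := by have := ht.2; linarith
    positivity
  · exact hz

theorem stmt14 (a b c : ℝ) (ha : 0 < a) (hb : 0 < b) (hc : 0 < c) :
    MonotoneOn (fun z : ℝ => incBeta z (a + c) b / incBeta z a b)
      (Set.Ioc (0 : ℝ) 1) := by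
  intro x hx y hy hxy
  obtain ⟨hx0, hx1⟩ := hx
  obtain ⟨hy0, hy1⟩ := hy
  have hac : 0 < a + c := by linarith
  set f : ℝ → ℝ := fun t => t ^ (a - 1) * (1 - t) ^ (b - 1) with hf
  set g : ℝ → ℝ := fun t => t ^ (a + c - 1) * (1 - t) ^ (b - 1) with hg
  have hfint : IntervalIntegrable f volume 0 1 := incBeta_integrand_integrable a b ha hb
  have hgint : IntervalIntegrable g volume 0 1 := incBeta_integrand_integrable (a + c) b hac hb
  have hsub1 : uIcc (0:ℝ) x ⊆ uIcc (0:ℝ) 1 := by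
    rw [uIcc_of_le hx0.le, uIcc_of_le (by norm_num : (0:ℝ) ≤ 1)]
    exact Icc_subset_Icc le_rfl hx1
  have hsub2 : uIcc x y ⊆ uIcc (0:ℝ) 1 := by
    rw [uIcc_of_le hxy, uIcc_of_le (by norm_num : (0:ℝ) ≤ 1)]
    exact Icc_subset_Icc hx0.le hy1
  have hf1 : IntervalIntegrable f volume 0 x := hfint.mono_set hsub1
  have hf2 : IntervalIntegrable f volume x y := hfint.mono_set hsub2
  have hg1 : IntervalIntegrable g volume 0 x := hgint.mono_set hsub1
  have hg2 : IntervalIntegrable g volume x y := hgint.mono_set hsub2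
  have hBx : 0 < incBeta x a b := incBeta_pos x a b ha hb hx0 hx1
  have hBy : 0 < incBeta y a b := incBeta_pos y a b ha hb hy0 hy1
  have hBx' : 0 < incBeta x (a + c) b := incBeta_pos x (a + c) b hac hb hx0 hx1
  simp only
  rw [div_le_div_iff₀ hBx hBy]
  -- decompose
  have hsplit_f : incBeta y a b = incBeta x a b + ∫ t in x..y, f t := by
    rw [incBeta, incBeta, ← integral_add_adjacent_intervals hf1 hf2]
  have hsplit_g : incBeta y (a + c) b = incBeta x (a + c) b + ∫ t in x..y, g t := by
    rw [incBeta, incBeta, ← integral_add_adjacent_intervals hg1 hg2]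
  rw [hsplit_f, hsplit_g]
  set Ja := ∫ t in x..y, f t with hJa
  set Jc := ∫ t in x..y, g t with hJc
  have hJa0 : 0 ≤ Ja := by
    apply integral_nonneg hxy
    intro u hu
    have h1 : 0 ≤ u := le_trans hx0.le hu.1
    have h2 : 0 ≤ 1 - u := by have := hu.2; linarith
    positivity
  -- I1 : incBeta x (a+c) b ≤ x^c * incBeta x a b
  have I1 : incBeta x (a + c) b ≤ x ^ c * incBeta x a b := by
    rw [incBeta, incBeta, ← intervalIntegral.integral_const_mul]
    rw [integral_of_le hx0.le, integral_of_le hx0.le]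
    apply setIntegral_mono_on (hg1.1.congr (by rfl)) _ measurableSet_Ioc
    · intro t ht
      have ht0 : 0 < t := ht.1
      have ht1 : 0 ≤ 1 - t := by have := ht.2; linarith
      have e : t ^ (a + c - 1) = t ^ c * t ^ (a - 1) := by
        rw [← Real.rpow_add ht0]; ring_nf
      rw [e]
      have htc : t ^ c ≤ x ^ c := Real.rpow_le_rpow ht0.le ht.2 hc.le
      calc t ^ c * t ^ (a - 1) * (1 - t) ^ (b - 1)
          ≤ x ^ c * t ^ (a - 1) * (1 - t) ^ (b - 1) := by
            apply mul_le_mul_of_nonneg_right _ (Real.rpow_nonneg ht1 _)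
            exact mul_le_mul_of_nonneg_right htc (Real.rpow_nonneg ht0.le _)
        _ = x ^ c * (t ^ (a - 1) * (1 - t) ^ (b - 1)) := by ring
    · exact (hf1.1.congr (by rfl)).const_mul _
  -- I2 : x^c * Ja ≤ Jc
  have I2 : x ^ c * Ja ≤ Jc := by
    rw [hJa, hJc, ← intervalIntegral.integral_const_mul, integral_of_le hxy, integral_of_le hxy]
    apply setIntegral_mono_on ((hf2.1.congr (by rfl)).const_mul _)
      (hg2.1.congr (by rfl)) measurableSet_Ioc
    intro t ht
    have ht0 : 0 < t := lt_of_le_of_lt hx0.le ht.1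
    have ht1 : 0 ≤ 1 - t := by have := ht.2; linarith
    have e : t ^ (a + c - 1) = t ^ c * t ^ (a - 1) := by
      rw [← Real.rpow_add ht0]; ring_nf
    have htc : x ^ c ≤ t ^ c := Real.rpow_le_rpow hx0.le ht.1.le hc.le
    calc x ^ c * (t ^ (a - 1) * (1 - t) ^ (b - 1))
        = x ^ c * t ^ (a - 1) * (1 - t) ^ (b - 1) := by ring
      _ ≤ t ^ c * t ^ (a - 1) * (1 - t) ^ (b - 1) := by
          apply mul_le_mul_of_nonneg_right _ (Real.rpow_nonneg ht1 _)
          exact mul_le_mul_of_nonneg_right htc (Real.rpow_nonneg ht0.le _)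
      _ = t ^ (a + c - 1) * (1 - t) ^ (b - 1) := by rw [e]
  nlinarith [mul_le_mul_of_nonneg_right I1 hJa0, mul_le_mul_of_nonneg_left I2 hBx.le]
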